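/- arXiv:2310.13758 — 5 statements merged into one kernel-verified Lean document; each statement's English description precedes it below -/
import Mathlib

section
/- Let f : G → H be a surjective group homomorphism, let P_H be a conjugate invariant positive cone of H, and let P_K be a positive cone of K = ker f that is invariant under conjugation by all elements of G. Then the set P = {g ∈ G : f(g) ∈ P_H or g ∈ P_K} is a conjugate invariant positive cone of G, and f(P \ ker f) = P_H. -/
/-- A conjugate-invariant positive cone of a group. -/
def IsCone {G : Type*} [Group G] (P : Set G) : Prop :=
  (∀ a ∈ P, ∀ b ∈ P, a * b ∈ P) ∧
  (∀ g : G, g ∈ P ∨ g⁻¹ ∈ P ∨ g = 1) ∧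
  ((1 : G) ∉ P) ∧ (∀ g ∈ P, g⁻¹ ∉ P) ∧
  (∀ g x : G, x ∈ P → g⁻¹ * x * g ∈ P)

/-- constructing a positive cone on `G` from a cone on `H` and a
`G`-conjugation-invariant cone on `ker f`, for a surjection `f : G → H`. -/
theorem cone_of_extension {G H : Type*} [Group G] [Group H] (f : G →* H)
    (hf : Function.Surjective f)
    (PH : Set H) (hPH : IsCone PH)
    (PK : Set G) (hPKker : PK ⊆ (f.ker : Set G))
    (hPKmul : ∀ a ∈ PK, ∀ b ∈ PK, a * b ∈ PK)
    (hPKtotal : ∀ g ∈ f.ker, g ∈ PK ∨ g⁻¹ ∈ PK ∨ g = 1)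
    (hPKone : (1 : G) ∉ PK)
    (hPKdisj : ∀ g ∈ PK, g⁻¹ ∉ PK)
    (hPKconj : ∀ g x : G, x ∈ PK → g⁻¹ * x * g ∈ PK) :
    IsCone {g : G | f g ∈ PH ∨ g ∈ PK} ∧
    f '' ({g : G | f g ∈ PH ∨ g ∈ PK} \ (f.ker : Set G)) = PH := by
  obtain ⟨hmul, htot, hone, hdisj, hconj⟩ := hPH
  have hk1 : ∀ g ∈ PK, f g = 1 := fun g hg => hPKker hg
  constructor
  · refine ⟨?_, ?_, ?_, ?_, ?_⟩
    · rintro a (ha | ha) b (hb | hb)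
      · exact Or.inl (by rw [map_mul]; exact hmul _ ha _ hb)
      · exact Or.inl (by rw [map_mul, hk1 b hb, mul_one]; exact ha)
      · exact Or.inl (by rw [map_mul, hk1 a ha, one_mul]; exact hb)
      · exact Or.inr (hPKmul a ha b hb)
    · intro g
      rcases htot (f g) with h | h | h
      · exact Or.inl (Or.inl h)
      · exact Or.inr (Or.inl (Or.inl (by rwa [map_inv])))
      · rcases hPKtotal g h with h' | h' | h'
        · exact Or.inl (Or.inr h')
        · exact Or.inr (Or.inl (Or.inr h'))
        · exact Or.inr (Or.inr h')
    · rintro (h | h)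
      · exact hone (by simpa using h)
      · exact hPKone h
    · rintro g (hg | hg) (hg' | hg')
      · exact hdisj _ hg (by rwa [map_inv] at hg')
      · have h1 : (f g)⁻¹ = 1 := by rw [← map_inv]; exact hk1 _ hg'
        exact hone (by rwa [inv_eq_one.mp h1] at hg)
      · exact hone (by rw [map_inv, hk1 g hg, inv_one] at hg'; exact hg')
      · exact hPKdisj g hg hg'
    · rintro g x (hx | hx)
      · exact Or.inl (by simpa using hconj (f g) (f x) hx)
      · exact Or.inr (hPKconj g x hx)
  · ext h
    constructor
    · rintro ⟨g, ⟨hg | hg, hgk⟩, rfl⟩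
      · exact hg
      · exact absurd (hPKker hg) hgk
    · intro hh
      obtain ⟨g, rfl⟩ := hf h
      refine ⟨g, ⟨Or.inl hh, ?_⟩, rfl⟩
      intro hg
      exact hone (by rwa [MonoidHom.mem_ker.mp hg] at hh)
end

section
/- Let G be a group and φ an automorphism of G. The semidirect product G ⋊_φ ℤ is bi-orderable if and only if G admits a bi-order (equivalently, a conjugate invariant positive cone) that is invariant under φ. -/
/-- `G ⋊_φ ℤ` is bi-orderable iff `G` has a φ-invariant
conjugate-invariant positive cone (i.e. a φ-invariant bi-order). -/
theorem semidirect_biorderable_iff {G : Type*} [Group G] (φ : G ≃* G) :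
    (∃ P : Set (SemidirectProduct G (Multiplicative ℤ)
        (zpowersHom (MulAut G) (φ : MulAut G))), IsCone P) ↔
    (∃ P : Set G, IsCone P ∧ ∀ g ∈ P, φ g ∈ P) := by
  constructor
  · rintro ⟨P, hmul, htri, hone, hinv, hconj⟩
    refine ⟨{g | SemidirectProduct.inl g ∈ P}, ⟨?_, ?_, ?_, ?_, ?_⟩, ?_⟩
    · intro a ha b hb
      have := hmul _ ha _ hb
      simpa [← map_mul] using this
    · intro g
      rcases htri (SemidirectProduct.inl g) with h | h | h
      · exact Or.inl h
      · exact Or.inr (Or.inl (by simpa [← map_inv] using h))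
      · exact Or.inr (Or.inr (SemidirectProduct.inl_injective (by simpa using h)))
    · simpa using hone
    · intro g hg h
      exact hinv _ hg (by simpa [← map_inv] using h)
    · intro g x hx
      have := hconj (SemidirectProduct.inl g) _ hx
      simpa [← map_inv, ← map_mul] using this
    · intro g hg
      have hco := hconj (SemidirectProduct.inr (Multiplicative.ofAdd (1 : ℤ)))⁻¹ _ hg
      rw [inv_inv] at hco
      have key := SemidirectProduct.inl_aut (φ := zpowersHom (MulAut G) (φ : MulAut G))
        (Multiplicative.ofAdd (1 : ℤ)) g
      simp only [zpowersHom_apply, toAdd_ofAdd, zpow_one] at key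
      show SemidirectProduct.inl (φ g) ∈ P
      rw [← map_inv] at hco
      rwa [← key] at hco
  · rintro ⟨Q, ⟨hmul, htri, hone, hinv, hconj⟩, hφ⟩
    have hφ' : ∀ g ∈ Q, φ⁻¹ g ∈ Q := by
      intro g hg
      rcases htri (φ⁻¹ g) with h | h | h
      · exact h
      · exfalso
        have h2 : φ ((φ⁻¹ g)⁻¹) ∈ Q := hφ _ h
        have h3 : φ (φ⁻¹ g) = g := φ.apply_symm_apply g
        rw [map_inv, h3] at h2
        exact hinv g hg h2
      · exfalso
        have : g = 1 := by
          have h2 := congrArg φ h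
          have h3 : φ (φ⁻¹ g) = g := φ.apply_symm_apply g
          rwa [h3, map_one] at h2
        exact hone (this ▸ hg)
    have hz : ∀ (n : ℤ), ∀ g ∈ Q, ((φ : MulAut G) ^ n) g ∈ Q := by
      intro n
      induction n using Int.induction_on with
      | zero => intro g hg; simpa using hg
      | succ k ih =>
        intro g hg
        have h1 := ih (φ g) (hφ g hg)
        rw [zpow_add, zpow_one]
        simpa [MulAut.mul_apply] using h1
      | pred k ih =>
        intro g hg
        have h1 := ih (φ⁻¹ g) (hφ' g hg)
        rw [zpow_sub, zpow_one]
        simpa [div_eq_mul_inv, MulAut.mul_apply] using h1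
    refine ⟨{p | 0 < Multiplicative.toAdd p.right ∨
        (Multiplicative.toAdd p.right = 0 ∧ p.left ∈ Q)}, ?_, ?_, ?_, ?_, ?_⟩
    · rintro a ha b hb
      simp only [Set.mem_setOf_eq, SemidirectProduct.mul_right, SemidirectProduct.mul_left,
        toAdd_mul] at ha hb ⊢
      rcases ha with ha | ⟨ha0, haQ⟩ <;> rcases hb with hb | ⟨hb0, hbQ⟩
      · left; omega
      · left; omega
      · left; omega
      · right
        refine ⟨by omega, ?_⟩
        have hr : a.right = 1 := Multiplicative.toAdd.injective (by simpa using ha0)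
        rw [hr]
        simpa using hmul _ haQ _ hbQ
    · intro p
      rcases lt_trichotomy (0 : ℤ) (Multiplicative.toAdd p.right) with h | h | h
      · exact Or.inl (Or.inl h)
      · rcases htri p.left with hl | hl | hl
        · exact Or.inl (Or.inr ⟨h.symm, hl⟩)
        · refine Or.inr (Or.inl (Or.inr ⟨?_, ?_⟩))
          · simp only [SemidirectProduct.inv_right, toAdd_inv]; omega
          · have hr : p.right = 1 := Multiplicative.toAdd.injective (by simpa using h.symm)
            rw [SemidirectProduct.inv_left, hr]
            simpa using hl
        · refine Or.inr (Or.inr ?_)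
          ext
          · simpa using hl
          · simpa using Multiplicative.toAdd.injective (by simpa using h.symm)
      · refine Or.inr (Or.inl (Or.inl ?_))
        simp only [SemidirectProduct.inv_right, toAdd_inv]
        omega
    · rintro (h | ⟨h0, hQ⟩)
      · simp at h
      · exact hone (by simpa using hQ)
    · rintro p (hp | ⟨h0, hQ⟩) (h | ⟨h0', hQ'⟩)
      · simp only [SemidirectProduct.inv_right, toAdd_inv] at h; omega
      · simp only [SemidirectProduct.inv_right, toAdd_inv] at h0'; omega
      · simp only [SemidirectProduct.inv_right, toAdd_inv] at h; omega
      · have hr : p.right = 1 := Multiplicative.toAdd.injective (by simpa using h0)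
        rw [SemidirectProduct.inv_left, hr] at hQ'
        simp only [inv_one, map_one, MulAut.one_apply] at hQ'
        exact hinv _ hQ hQ'
    · rintro g x (hx | ⟨h0, hQ⟩)
      · left
        simp only [SemidirectProduct.mul_right, SemidirectProduct.inv_right, toAdd_mul, toAdd_inv]
        omega
      · have hr1 : x.right = 1 := Multiplicative.toAdd.injective (by simpa using h0)
        have hx1 : x = SemidirectProduct.inl x.left := by
          ext
          · rw [SemidirectProduct.left_inl]
          · rw [SemidirectProduct.right_inl, hr1]
        have hg1 : g = SemidirectProduct.inl g.left * SemidirectProduct.inr g.right :=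
          (SemidirectProduct.inl_left_mul_inr_right g).symm
        have key : g⁻¹ * x * g = SemidirectProduct.inl
            (((zpowersHom (MulAut G) (φ : MulAut G)) g.right)⁻¹
              (g.left⁻¹ * x.left * g.left)) := by
          rw [SemidirectProduct.inl_aut_inv]
          conv_lhs => rw [hg1, hx1]
          rw [map_mul, map_mul, map_inv]
          simp only [mul_inv_rev, mul_assoc, map_inv]
        rw [key]
        right
        refine ⟨by simp, ?_⟩
        rw [SemidirectProduct.left_inl]
        have hmem := hconj g.left x.left hQ
        have hpow : ((zpowersHom (MulAut G) (φ : MulAut G)) g.right)⁻¹ =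
            (φ : MulAut G) ^ (-(Multiplicative.toAdd g.right)) := by
          simp [zpow_neg]
        rw [hpow]
        exact hz _ _ hmem
end

section
/- Let G be a free group of finite rank with lower central series G = G₁ ⊇ G₂ ⊇ ⋯ (G_{n+1} = [G_n, G]). A standard bi-order on G (one constructed lexicographically from positive cones on the lower central series quotients A_n = G_n/G_{n+1}) has the property that every term G_n of the lower central series is a convex subgroup. Conversely, if every G_n is convex with respect to a bi-order of G, then that bi-order is standard. -/
/-- a bi-order (given by its positive cone `P`) on a finite rank
free group is standard — i.e. the sign of an element depends only on its class
in `G_{n(g)} / G_{n(g)+1}` — if and only if every term of the lower central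
series is convex. -/
theorem standard_iff_lcs_convex {r : ℕ} (P : Set (FreeGroup (Fin r)))
    (hmul : ∀ a ∈ P, ∀ b ∈ P, a * b ∈ P)
    (htotal : ∀ g : FreeGroup (Fin r), g ∈ P ∨ g⁻¹ ∈ P ∨ g = 1)
    (hone : (1 : FreeGroup (Fin r)) ∉ P)
    (hdisj : ∀ g ∈ P, g⁻¹ ∉ P)
    (hconj : ∀ g x : FreeGroup (Fin r), x ∈ P → g⁻¹ * x * g ∈ P) :
    (∀ n : ℕ, ∀ g h : FreeGroup (Fin r),
        g ∈ (⊤ : Subgroup (FreeGroup (Fin r))).lowerCentralSeries n →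
        h ∈ (⊤ : Subgroup (FreeGroup (Fin r))).lowerCentralSeries n →
        g ∉ (⊤ : Subgroup (FreeGroup (Fin r))).lowerCentralSeries (n + 1) →
        g⁻¹ * h ∈ (⊤ : Subgroup (FreeGroup (Fin r))).lowerCentralSeries (n + 1) →
        (g ∈ P ↔ h ∈ P)) ↔
    (∀ n : ℕ, ∀ a ∈ (⊤ : Subgroup (FreeGroup (Fin r))).lowerCentralSeries n,
        ∀ b ∈ (⊤ : Subgroup (FreeGroup (Fin r))).lowerCentralSeries n,
        ∀ g : FreeGroup (Fin r), a⁻¹ * g ∈ P → g⁻¹ * b ∈ P →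
        g ∈ (⊤ : Subgroup (FreeGroup (Fin r))).lowerCentralSeries n) := by
  classical
  constructor
  · -- standard ⇒ convex
    intro hstd n a ha b hb g hag hgb
    by_contra hgn
    -- find m with g ∈ G_m \ G_{m+1} and m+1 ≤ n
    have hex : ∃ k, g ∉ (⊤ : Subgroup (FreeGroup (Fin r))).lowerCentralSeries k := ⟨n, hgn⟩
    set k := Nat.find hex with hk
    have hkspec : g ∉ (⊤ : Subgroup (FreeGroup (Fin r))).lowerCentralSeries k := Nat.find_spec hex
    have hkle : k ≤ n := Nat.find_le hgn
    have hk0 : k ≠ 0 := by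
      intro h0
      apply hkspec
      rw [h0]
      simp [Subgroup.lowerCentralSeries_zero]
    obtain ⟨m, hm⟩ := Nat.exists_eq_succ_of_ne_zero hk0
    have hgm : g ∈ (⊤ : Subgroup (FreeGroup (Fin r))).lowerCentralSeries m := by
      by_contra h
      have : k ≤ m := Nat.find_le h
      omega
    have hgm1 : g ∉ (⊤ : Subgroup (FreeGroup (Fin r))).lowerCentralSeries (m + 1) := by
      rw [show m + 1 = k from hm.symm]; exact hkspec
    have hmn : m + 1 ≤ n := by omega
    have hle : (⊤ : Subgroup (FreeGroup (Fin r))).lowerCentralSeries n ≤ (⊤ : Subgroup (FreeGroup (Fin r))).lowerCentralSeries (m + 1) :=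
      Subgroup.lowerCentralSeries_antitone ⊤ hmn
    have ha1 : a ∈ (⊤ : Subgroup (FreeGroup (Fin r))).lowerCentralSeries (m + 1) := hle ha
    have hb1 : b ∈ (⊤ : Subgroup (FreeGroup (Fin r))).lowerCentralSeries (m + 1) := hle hb
    have hle' : (⊤ : Subgroup (FreeGroup (Fin r))).lowerCentralSeries (m + 1) ≤ (⊤ : Subgroup (FreeGroup (Fin r))).lowerCentralSeries m :=
      Subgroup.lowerCentralSeries_antitone ⊤ (Nat.le_succ m)
    have hnorm : ((⊤ : Subgroup (FreeGroup (Fin r))).lowerCentralSeries (m + 1)).Normal := by infer_instance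
    -- g ∈ P  from  a⁻¹ * g ∈ P
    have h1 : g ∈ P := by
      have hag1 : a⁻¹ * g ∈ (⊤ : Subgroup (FreeGroup (Fin r))).lowerCentralSeries m :=
        mul_mem (inv_mem (hle' ha1)) hgm
      have hag2 : a⁻¹ * g ∉ (⊤ : Subgroup (FreeGroup (Fin r))).lowerCentralSeries (m + 1) := by
        intro h
        exact hgm1 (by simpa using mul_mem ha1 h)
      have hconjmem : g⁻¹ * (a⁻¹ * g) ∈ (⊤ : Subgroup (FreeGroup (Fin r))).lowerCentralSeries (m + 1) := by
        have := hnorm.conj_mem a⁻¹ (inv_mem ha1) g⁻¹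
        simpa [mul_assoc] using this
      exact (hstd m g (a⁻¹ * g) hgm hag1 hgm1 hconjmem).mpr hag
    -- g⁻¹ ∈ P  from  g⁻¹ * b ∈ P
    have h2 : g⁻¹ ∈ P := by
      have hgm' : g⁻¹ ∈ (⊤ : Subgroup (FreeGroup (Fin r))).lowerCentralSeries m := inv_mem hgm
      have hgm1' : g⁻¹ ∉ (⊤ : Subgroup (FreeGroup (Fin r))).lowerCentralSeries (m + 1) := fun h => hgm1 (by simpa using inv_mem h)
      have hgb1 : g⁻¹ * b ∈ (⊤ : Subgroup (FreeGroup (Fin r))).lowerCentralSeries m :=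
        mul_mem hgm' (hle' hb1)
      have hgb2 : g⁻¹ * b ∉ (⊤ : Subgroup (FreeGroup (Fin r))).lowerCentralSeries (m + 1) := by
        intro h
        exact hgm1' (by simpa [mul_assoc] using mul_mem h (inv_mem hb1))
      have hmem : (g⁻¹)⁻¹ * (g⁻¹ * b) ∈ (⊤ : Subgroup (FreeGroup (Fin r))).lowerCentralSeries (m + 1) := by
        simpa [mul_assoc] using hb1
      exact (hstd m g⁻¹ (g⁻¹ * b) hgm' hgb1 hgm1' hmem).mpr hgb
    exact hdisj g h1 h2
  · -- convex ⇒ standard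
    intro hconv n g h hg hh hgn1 hghn
    have hhn1 : h ∉ (⊤ : Subgroup (FreeGroup (Fin r))).lowerCentralSeries (n + 1) := by
      intro hh1
      exact hgn1 (by simpa using mul_mem hh1 (inv_mem hghn))
    -- key: if x ∈ P, y⁻¹ ∈ P and x⁻¹ y ∈ G_{n+1}, then x ∈ G_{n+1}
    have key : ∀ x y : FreeGroup (Fin r), x ∈ P → y⁻¹ ∈ P →
        x⁻¹ * y ∈ (⊤ : Subgroup (FreeGroup (Fin r))).lowerCentralSeries (n + 1) → x ∈ (⊤ : Subgroup (FreeGroup (Fin r))).lowerCentralSeries (n + 1) := by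
      intro x y hx hy hxy
      have hb : y⁻¹ * x ∈ (⊤ : Subgroup (FreeGroup (Fin r))).lowerCentralSeries (n + 1) := by
        simpa using inv_mem hxy
      refine hconv (n + 1) 1 (one_mem _) (y⁻¹ * x) hb x ?_ ?_
      · simpa using hx
      · have := hconj x y⁻¹ hy
        simpa [mul_assoc] using this
    constructor
    · intro hgP
      by_contra hhP
      rcases htotal h with h1 | h1 | h1
      · exact hhP h1
      · exact hgn1 (key g h hgP h1 hghn)
      · exact hhn1 (h1 ▸ one_mem _)
    · intro hhP
      by_contra hgP
      rcases htotal g with h1 | h1 | h1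
      · exact hgP h1
      · have hhg : h⁻¹ * g ∈ (⊤ : Subgroup (FreeGroup (Fin r))).lowerCentralSeries (n + 1) := by
          simpa using inv_mem hghn
        exact hhn1 (key h g hhP (by simpa using h1) hhg)
      · exact hgn1 (h1 ▸ one_mem _)
end

section
/- Let (G, <) be a bi-ordered group, C a convex subgroup, and suppose φ : G → G is an automorphism preserving C and the order <. Suppose μ : G → ℝ is a homomorphism such that for all g, the sign of μ(g) is preserved by φ (i.e., μ(g) > 0 iff μ(φ(g)) > 0, and μ(g) = 0 iff μ(φ(g)) = 0). Then for all v, w ∈ G with μ(v) ≠ 0 and μ(w) ≠ 0, μ(v)/μ(w) = μ(φ(v))/μ(φ(w)). -/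
lemma eq_of_rat_cuts (x y : ℝ) (h : ∀ q : ℚ, (q:ℝ) < x ↔ (q:ℝ) < y) : x = y := by
  by_contra hne
  rcases lt_or_gt_of_ne hne with hlt | hlt
  · obtain ⟨q, hq1, hq2⟩ := exists_rat_btwn hlt
    exact absurd hq1 (not_lt_of_gt ((h q).mpr hq2))
  · obtain ⟨q, hq1, hq2⟩ := exists_rat_btwn hlt
    exact absurd hq1 (not_lt_of_gt ((h q).mp hq2))

/-- Key arithmetic lemma: if two pairs with positive denominators have the same
integer comparison pattern, their ratios agree. -/
lemma ratio_eq_of_int_cuts (x y x' y' : ℝ) (hy : 0 < y) (hy' : 0 < y')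
    (h : ∀ a b : ℤ, a * y < b * x ↔ a * y' < b * x') : x / y = x' / y' := by
  apply eq_of_rat_cuts
  intro q
  have hden : (0:ℝ) < (q.den : ℝ) := by exact_mod_cast q.pos
  have hq : (q:ℝ) = (q.num : ℝ) / (q.den : ℝ) := Rat.cast_def q
  have key : ∀ (z w : ℝ), 0 < w → ((q:ℝ) < z / w ↔ (q.num : ℝ) * w < (q.den : ℤ) * z) := by
    intro z w hw
    rw [lt_div_iff₀ hw, hq, div_mul_eq_mul_div, div_lt_iff₀ hden]
    push_cast
    constructor <;> intro <;> linarith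
  rw [key x y hy, key x' y' hy']
  exact h q.num q.den

/-- if `μ : G → ℝ` is a homomorphism whose sign pattern is
preserved by an order- and `C`-preserving automorphism `φ` of the bi-ordered
group `G`, then `φ` preserves ratios of `μ`-values. -/
theorem ratio_preserved {G : Type*} [Group G] [LinearOrder G]
    [CovariantClass G G (· * ·) (· < ·)]
    [CovariantClass G G (Function.swap (· * ·)) (· < ·)]
    (C : Subgroup G)
    (hC : ∀ a ∈ C, ∀ b ∈ C, ∀ g : G, a < g → g < b → g ∈ C)
    (φ : G ≃* G)
    (hφC : ∀ g : G, g ∈ C ↔ φ g ∈ C)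
    (hφord : ∀ a b : G, a < b → φ a < φ b)
    (μ : G → ℝ) (hμ : ∀ g h : G, μ (g * h) = μ g + μ h)
    (hpos : ∀ g : G, 0 < μ g ↔ 0 < μ (φ g))
    (hzero : ∀ g : G, μ g = 0 ↔ μ (φ g) = 0) :
    ∀ v w : G, μ v ≠ 0 → μ w ≠ 0 → μ v / μ w = μ (φ v) / μ (φ w) := by
  have h1 : μ 1 = 0 := by have := hμ 1 1; simp only [mul_one] at this; linarith
  have hinv : ∀ g : G, μ g⁻¹ = - μ g := by
    intro g; have := hμ g g⁻¹; rw [mul_inv_cancel] at this; linarith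
  have hz : ∀ (g : G) (n : ℤ), μ (g ^ n) = n * μ g := by
    intro g n
    induction n using Int.induction_on with
    | zero => simpa using h1
    | succ k ih => rw [zpow_add, hμ, ih, zpow_one]; push_cast; ring
    | pred k ih =>
        rw [zpow_sub, zpow_one, hμ, hinv, ih]
        push_cast; ring
  -- cut comparison transfer
  have hcut : ∀ (v w : G) (a b : ℤ),
      a * μ w < b * μ v ↔ a * μ (φ w) < b * μ (φ v) := by
    intro v w a b
    have e1 : μ (v ^ b * (w ^ a)⁻¹) = b * μ v - a * μ w := by
      rw [hμ, hinv, hz, hz]; ring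
    have e2 : μ (φ (v ^ b * (w ^ a)⁻¹)) = b * μ (φ v) - a * μ (φ w) := by
      rw [map_mul, map_inv, map_zpow, map_zpow, hμ, hinv, hz, hz]; ring
    have := hpos (v ^ b * (w ^ a)⁻¹)
    rw [e1, e2] at this
    constructor
    · intro h; linarith [this.mp (by linarith)]
    · intro h; linarith [this.mpr (by linarith)]
  -- main proof
  have main : ∀ v w : G, 0 < μ w → μ v / μ w = μ (φ v) / μ (φ w) := by
    intro v w hw
    exact ratio_eq_of_int_cuts _ _ _ _ hw ((hpos w).mp hw)
      (fun a b => hcut v w a b)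
  intro v w hv hw
  rcases hw.lt_or_gt with hw' | hw'
  · have := main v w⁻¹ (by rw [hinv]; linarith)
    rw [hinv, map_inv, hinv, div_neg, div_neg] at this
    exact neg_injective this
  · exact main v w hw'
end

section
/- Let (G, <) be a finitely generated nontrivial bi-ordered group. Then among the proper subgroups of G convex with respect to <, there is a unique maximal one C; moreover C is normal in G, the quotient G/C is abelian, and any order-preserving automorphism φ of G satisfies φ(C) = C. -/
section BiOrdered

variable {G : Type*} [Group G] [LinearOrder G]
  [CovariantClass G G (· * ·) (· < ·)]
  [CovariantClass G G (Function.swap (· * ·)) (· < ·)]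

instance (priority := 100) bi_cov_le : CovariantClass G G (· * ·) (· ≤ ·) :=
  covariantClass_le_of_lt G G _

instance (priority := 100) bi_cov_swap_le :
    CovariantClass G G (Function.swap (· * ·)) (· ≤ ·) :=
  covariantClass_le_of_lt G G _

/-- Convexity predicate matching the theorem statement. -/
def ConvexSub (D : Subgroup G) : Prop :=
  ∀ a ∈ D, ∀ b ∈ D, ∀ g : G, a < g → g < b → g ∈ D

lemma convexSub_bot : ConvexSub (⊥ : Subgroup G) := by
  intro a ha b hb g hag hgb
  rw [Subgroup.mem_bot] at ha hb
  subst ha; subst hb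
  exact absurd (hag.trans hgb) (lt_irrefl _)

lemma aux_pow_mul (a b : G) (h : b * a ≤ a * b) (n : ℕ) : b ^ n * a ≤ a * b ^ n := by
  induction n with
  | zero => simp
  | succ n ih =>
    calc b ^ (n+1) * a = b ^ n * (b * a) := by rw [pow_succ, mul_assoc]
      _ ≤ b ^ n * (a * b) := mul_le_mul_right h _
      _ = (b ^ n * a) * b := by rw [mul_assoc]
      _ ≤ (a * b ^ n) * b := mul_le_mul_left ih _
      _ = a * b ^ (n+1) := by rw [pow_succ, mul_assoc]

lemma aux_mul_pow (a b : G) (h : b * a ≤ a * b) (n : ℕ) : (a * b) ^ n ≤ a ^ n * b ^ n := by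
  induction n with
  | zero => simp
  | succ n ih =>
    calc (a*b) ^ (n+1) = (a*b) ^ n * (a*b) := by rw [pow_succ]
      _ ≤ (a ^ n * b ^ n) * (a * b) := mul_le_mul_left ih _
      _ = a ^ n * (b ^ n * a) * b := by simp [mul_assoc]
      _ ≤ a ^ n * (a * b ^ n) * b := by
          exact mul_le_mul_left (mul_le_mul_right (aux_pow_mul a b h n) _) _
      _ = a ^ (n+1) * b ^ (n+1) := by simp [pow_succ, pow_succ', mul_assoc]

lemma aux_pow_mul' (a b : G) (h : b * a ≤ a * b) (n : ℕ) : b ^ n * a ^ n ≤ (b * a) ^ n := by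
  induction n with
  | zero => simp
  | succ n ih =>
    calc b ^ (n+1) * a ^ (n+1) = b * (b ^ n * a) * a ^ n := by
          simp [pow_succ', mul_assoc]
      _ ≤ b * (a * b ^ n) * a ^ n := by
          exact mul_le_mul_left (mul_le_mul_right (aux_pow_mul a b h n) _) _
      _ = (b * a) * (b ^ n * a ^ n) := by simp [mul_assoc]
      _ ≤ (b * a) * (b * a) ^ n := mul_le_mul_right ih _
      _ = (b * a) ^ (n+1) := by rw [pow_succ']

lemma aux_zpow_mono {c : G} (hc : 1 < c) {j k : ℤ} (h : j ≤ k) : c ^ j ≤ c ^ k := by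
  have h0 : (0:ℤ) ≤ k - j := by omega
  have h1 : (1:G) ≤ c ^ (k - j) := by
    rw [show k - j = ((k-j).toNat : ℤ) by omega, zpow_natCast]
    exact Left.one_le_pow_of_le hc.le _
  calc c ^ j = c ^ j * 1 := (mul_one _).symm
    _ ≤ c ^ j * c ^ (k - j) := mul_le_mul_right h1 _
    _ = c ^ k := by rw [← zpow_add]; ring_nf

lemma aux_zpow_strictMono {c : G} (hc : 1 < c) {j k : ℤ} (h : j < k) : c ^ j < c ^ k := by
  have h1 : c ^ (1:ℤ) ≤ c ^ (k - j) := aux_zpow_mono hc (by omega)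
  rw [zpow_one] at h1
  calc c ^ j = c ^ j * 1 := (mul_one _).symm
    _ < c ^ j * c ^ (k - j) := mul_lt_mul_right (lt_of_lt_of_le hc h1) _
    _ = c ^ k := by rw [← zpow_add]; ring_nf

lemma aux_zpow_le_cancel {c : G} (hc : 1 < c) {j k : ℤ} (h : c ^ j ≤ c ^ k) : j ≤ k := by
  by_contra hh
  exact absurd (aux_zpow_strictMono hc (by omega : k < j)) h.not_gt

/-- KEY LEMMA: in a bi-ordered group, a commutator greater than 1 cannot be cofinal. -/
lemma key_not_cofinal (x y : G) (hc : 1 < x * y * x⁻¹ * y⁻¹)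
    (cof : ∀ h : G, ∃ n : ℕ, h < (x * y * x⁻¹ * y⁻¹) ^ n) : False := by
  set c := x * y * x⁻¹ * y⁻¹ with hcdef
  -- greatest integer k with c^k ≤ g
  have hex : ∀ g : G, ∃ k : ℤ, c ^ k ≤ g ∧ ∀ j : ℤ, c ^ j ≤ g → j ≤ k := by
    intro g
    have hbdd : ∃ b : ℤ, ∀ z : ℤ, c ^ z ≤ g → z ≤ b := by
      obtain ⟨m, hm⟩ := cof g
      refine ⟨m, fun z hz => ?_⟩
      have : c ^ z ≤ c ^ (m:ℤ) := by
        rw [zpow_natCast]; exact hz.trans hm.le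
      exact aux_zpow_le_cancel hc this
    have hinh : ∃ z : ℤ, c ^ z ≤ g := by
      obtain ⟨m, hm⟩ := cof g⁻¹
      refine ⟨-(m:ℤ), ?_⟩
      rw [zpow_neg, zpow_natCast]
      have := inv_lt_inv_iff.mpr hm
      rw [inv_inv] at this
      exact this.le
    obtain ⟨ub, hub, hmax⟩ := Int.exists_greatest_of_bdd hbdd hinh
    exact ⟨ub, hub, hmax⟩
  choose p hp1 hp2 using hex
  have plt : ∀ g : G, g < c ^ (p g + 1) := by
    intro g
    by_contra hcon
    push_neg at hcon
    have := hp2 g _ hcon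
    omega
  have pmono : ∀ {g h : G}, g ≤ h → p g ≤ p h := by
    intro g h hgh
    exact hp2 h _ ((hp1 g).trans hgh)
  have padd_le : ∀ g h : G, p g + p h ≤ p (g * h) := by
    intro g h
    refine hp2 _ _ ?_
    rw [zpow_add]
    exact mul_le_mul' (hp1 g) (hp1 h)
  have ple_add : ∀ g h : G, p (g * h) ≤ p g + p h + 1 := by
    intro g h
    have h2 : g * h < c ^ (p g + p h + 2) := by
      calc g * h < g * c ^ (p h + 1) := mul_lt_mul_right (plt h) _
        _ < c ^ (p g + 1) * c ^ (p h + 1) := mul_lt_mul_left (plt g) _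
        _ = c ^ (p g + p h + 2) := by rw [← zpow_add]; ring_nf
    have h3 : c ^ (p (g*h)) < c ^ (p g + p h + 2) := lt_of_le_of_lt (hp1 _) h2
    have := aux_zpow_le_cancel hc h3.le
    rcases lt_or_eq_of_le this with h4 | h4
    · omega
    · exfalso; rw [h4] at h3; exact lt_irrefl _ h3
  have pone : p 1 = 0 := by
    have hle : (0:ℤ) ≤ p 1 := hp2 1 0 (by simp)
    have hge : p 1 ≤ 0 := by
      by_contra hcon
      push_neg at hcon
      have h1 : c ^ (1:ℤ) ≤ c ^ (p 1) := aux_zpow_mono hc (by omega)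
      have h2 := (h1.trans (hp1 1))
      rw [zpow_one] at h2
      exact absurd h2 hc.not_ge
    omega
  have ppow : ∀ n : ℕ, p (c ^ n) = n := by
    intro n
    have h1 : (n:ℤ) ≤ p (c ^ n) := hp2 _ _ (by rw [zpow_natCast])
    have h2 : p (c ^ n) ≤ (n:ℤ) := by
      refine aux_zpow_le_cancel hc ?_
      rw [zpow_natCast]
      exact hp1 _
    omega
  have pinv : ∀ g : G, p g + p g⁻¹ ≤ 0 := by
    intro g
    have := padd_le g g⁻¹
    rw [mul_inv_cancel, pone] at this
    exact this
  -- Set up u, v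
  set u := x * y with hu
  set v := y * x with hv
  have hcu : c * v = u := by
    rw [hcdef, hu, hv]; group
  have hvu : v < u := by
    have h1 : 1 * v < c * v := mul_lt_mul_left hc v
    rw [one_mul, hcu] at h1
    exact h1
  have hyx : y * x ≤ x * y := hvu.le
  have step2 : ∀ n : ℕ, p (u ^ n) ≤ p (v ^ n) + 1 := by
    intro n
    have h1 : p (u ^ n) ≤ p (x ^ n * y ^ n) := pmono (aux_mul_pow x y hyx n)
    have h2 : p (x ^ n * y ^ n) ≤ p (x ^ n) + p (y ^ n) + 1 := ple_add _ _
    have h3 : p (y ^ n) + p (x ^ n) ≤ p (y ^ n * x ^ n) := padd_le _ _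
    have h4 : p (y ^ n * x ^ n) ≤ p (v ^ n) := pmono (aux_pow_mul' x y hyx n)
    omega
  rcases le_total (c * v) (v * c) with hcase | hcase
  · -- c*v ≤ v*c : then c^n v^n ≤ (c*v)^n = u^n
    have h1 : ∀ n : ℕ, c ^ n * v ^ n ≤ (c * v) ^ n := fun n => aux_pow_mul' v c hcase n
    have h2 : p (c ^ 2) + p (v ^ 2) ≤ p (c ^ 2 * v ^ 2) := padd_le _ _
    have h3 : p (c ^ 2 * v ^ 2) ≤ p (u ^ 2) := by
      refine pmono ?_
      have := h1 2
      rwa [hcu] at this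
    have h4 := step2 2
    have h5 := ppow 2
    omega
  · -- v*c ≤ c*v : then v^n c^n ≤ (v*c)^n = (v*u*v⁻¹)^n = v*u^n*v⁻¹
    have h1 : ∀ n : ℕ, v ^ n * c ^ n ≤ (v * c) ^ n := fun n => aux_pow_mul' c v hcase n
    have hvc : v * c = v * u * v⁻¹ := by
      rw [← hcu]; group
    have h2 : p (v ^ 4) + p (c ^ 4) ≤ p (v ^ 4 * c ^ 4) := padd_le _ _
    have h3 : p (v ^ 4 * c ^ 4) ≤ p (v * u ^ 4 * v⁻¹) := by
      refine pmono ?_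
      have := h1 4
      rw [hvc] at this
      rwa [conj_pow] at this
    have h4 : p (v * u ^ 4 * v⁻¹) ≤ p (v * u ^ 4) + p v⁻¹ + 1 := ple_add _ _
    have h5 : p (v * u ^ 4) ≤ p v + p (u ^ 4) + 1 := ple_add _ _
    have h6 := pinv v
    have h7 := step2 4
    have h8 := ppow 4
    omega

/-- For a commutator `c > 1`, the set of elements bounded by powers of `c`
is a proper convex subgroup containing `c`. -/
lemma comm_mem_aux (x y : G) (hc : 1 < x * y * x⁻¹ * y⁻¹) :
    ∃ D : Subgroup G, ConvexSub D ∧ D ≠ ⊤ ∧ x * y * x⁻¹ * y⁻¹ ∈ D := by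
  set c := x * y * x⁻¹ * y⁻¹ with hcdef
  set B : Subgroup G :=
    { carrier := {g | ∃ n : ℕ, g < c ^ n ∧ g⁻¹ < c ^ n}
      one_mem' := ⟨1, by simpa using hc, by simpa using hc⟩
      inv_mem' := by
        rintro a ⟨n, h1, h2⟩
        exact ⟨n, h2, by rwa [inv_inv]⟩
      mul_mem' := by
        rintro a b ⟨n, ha1, ha2⟩ ⟨m, hb1, hb2⟩
        refine ⟨n + m, ?_, ?_⟩
        · calc a * b < c ^ n * c ^ m := mul_lt_mul_of_lt_of_lt ha1 hb1
            _ = c ^ (n + m) := (pow_add c n m).symm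
        · rw [mul_inv_rev]
          calc b⁻¹ * a⁻¹ < c ^ m * c ^ n := mul_lt_mul_of_lt_of_lt hb2 ha2
            _ = c ^ (m + n) := (pow_add c m n).symm
            _ = c ^ (n + m) := by rw [Nat.add_comm] } with hB
  have hmemB : ∀ g : G, g ∈ B ↔ ∃ n : ℕ, g < c ^ n ∧ g⁻¹ < c ^ n := fun g => Iff.rfl
  have hBconv : ConvexSub B := by
    intro a ha b hb g hag hgb
    rw [hmemB] at ha hb ⊢
    obtain ⟨n, ha1, ha2⟩ := ha
    obtain ⟨m, hb1, hb2⟩ := hb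
    refine ⟨n + m, ?_, ?_⟩
    · calc g < b := hgb
        _ < c ^ m := hb1
        _ ≤ c ^ (n + m) := pow_le_pow_right' hc.le (by omega)
    · calc g⁻¹ < a⁻¹ := inv_lt_inv_iff.mpr hag
        _ < c ^ n := ha2
        _ ≤ c ^ (n + m) := pow_le_pow_right' hc.le (by omega)
  have hcB : c ∈ B := by
    rw [hmemB]
    refine ⟨2, ?_, ?_⟩
    · calc c = c * 1 := (mul_one c).symm
        _ < c * c := mul_lt_mul_right hc c
        _ = c ^ 2 := (sq c).symm
    · calc c⁻¹ < 1 := by simpa using hc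
        _ < c ^ 2 := by
          calc (1:G) < c := hc
            _ = c * 1 := (mul_one c).symm
            _ < c * c := mul_lt_mul_right hc c
            _ = c ^ 2 := (sq c).symm
  by_cases hBtop : B = ⊤
  · exfalso
    refine key_not_cofinal x y hc ?_
    intro h
    have : h ∈ B := hBtop ▸ Subgroup.mem_top h
    rw [hmemB] at this
    obtain ⟨n, h1, _⟩ := this
    exact ⟨n, h1⟩
  · exact ⟨B, hBconv, hBtop, hcB⟩

end BiOrdered

/-- a finitely generated nontrivial bi-ordered group has a
unique maximal proper convex subgroup `C`; moreover `C` is normal, `G/C` is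
abelian, and any order-preserving automorphism preserves `C`. -/
theorem maximal_convex_subgroup {G : Type*} [Group G] [LinearOrder G]
    [CovariantClass G G (· * ·) (· < ·)]
    [CovariantClass G G (Function.swap (· * ·)) (· < ·)]
    [Group.FG G] [Nontrivial G] :
    ∃ C : Subgroup G,
      (∀ a ∈ C, ∀ b ∈ C, ∀ g : G, a < g → g < b → g ∈ C) ∧
      C ≠ ⊤ ∧
      (∀ D : Subgroup G,
        (∀ a ∈ D, ∀ b ∈ D, ∀ g : G, a < g → g < b → g ∈ D) →
        D ≠ ⊤ → D ≤ C) ∧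
      C.Normal ∧
      (∀ x y : G, x * y * x⁻¹ * y⁻¹ ∈ C) ∧
      (∀ φ : G ≃* G, (∀ a b : G, a < b → φ a < φ b) →
        ∀ g : G, g ∈ C ↔ φ g ∈ C) := by
  classical
  have hbot_ne : (⊥ : Subgroup G) ≠ ⊤ := by
    obtain ⟨a, ha⟩ := exists_ne (1 : G)
    intro h
    exact ha (by simpa [Subgroup.mem_bot] using (h ▸ Subgroup.mem_top a : a ∈ (⊥ : Subgroup G)))
  -- chain property of convex subgroups
  have chain : ∀ D₁ D₂ : Subgroup G, ConvexSub D₁ → ConvexSub D₂ → D₁ ≤ D₂ ∨ D₂ ≤ D₁ := by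
    intro D₁ D₂ h₁ h₂
    by_contra hcon
    push_neg at hcon
    obtain ⟨hn1, hn2⟩ := hcon
    obtain ⟨a, ha1, ha2⟩ : ∃ a, a ∈ D₁ ∧ a ∉ D₂ := by
      by_contra hh
      push_neg at hh
      exact hn1 fun g hg => hh g hg
    obtain ⟨b, hb1, hb2⟩ : ∃ b, b ∈ D₂ ∧ b ∉ D₁ := by
      by_contra hh
      push_neg at hh
      exact hn2 fun g hg => hh g hg
    have hane : a ≠ 1 := fun h => ha2 (h ▸ one_mem D₂)
    have hbne : b ≠ 1 := fun h => hb2 (h ▸ one_mem D₁)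
    have posrep : ∀ g : G, g ≠ 1 → ∃ g' : G, 1 < g' ∧ ∀ D : Subgroup G, (g ∈ D ↔ g' ∈ D) := by
      intro g hg
      rcases lt_trichotomy g 1 with h | h | h
      · exact ⟨g⁻¹, one_lt_inv'.mpr h, fun D => (Subgroup.inv_mem_iff D).symm⟩
      · exact absurd h hg
      · exact ⟨g, h, fun D => Iff.rfl⟩
    obtain ⟨a', ha'pos, ha'iff⟩ := posrep a hane
    obtain ⟨b', hb'pos, hb'iff⟩ := posrep b hbne
    have ha'1 : a' ∈ D₁ := (ha'iff D₁).mp ha1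
    have ha'2 : a' ∉ D₂ := fun h => ha2 ((ha'iff D₂).mpr h)
    have hb'1 : b' ∈ D₂ := (hb'iff D₂).mp hb1
    have hb'2 : b' ∉ D₁ := fun h => hb2 ((hb'iff D₁).mpr h)
    rcases lt_trichotomy a' b' with h | h | h
    · exact ha'2 (h₂ 1 (one_mem D₂) b' hb'1 a' ha'pos h)
    · exact ha'2 (h ▸ hb'1)
    · exact hb'2 (h₁ 1 (one_mem D₁) a' ha'1 b' hb'pos h)
  -- the union of all proper convex subgroups
  set C : Subgroup G :=
    { carrier := {g | ∃ D : Subgroup G, ConvexSub D ∧ D ≠ ⊤ ∧ g ∈ D}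
      one_mem' := ⟨⊥, convexSub_bot, hbot_ne, one_mem _⟩
      inv_mem' := by
        rintro a ⟨D, h1, h2, h3⟩
        exact ⟨D, h1, h2, inv_mem h3⟩
      mul_mem' := by
        rintro a b ⟨D₁, h11, h12, h13⟩ ⟨D₂, h21, h22, h23⟩
        rcases chain D₁ D₂ h11 h21 with h | h
        · exact ⟨D₂, h21, h22, mul_mem (h h13) h23⟩
        · exact ⟨D₁, h11, h12, mul_mem h13 (h h23)⟩ } with hC
  have hmemC : ∀ g : G, g ∈ C ↔ ∃ D : Subgroup G, ConvexSub D ∧ D ≠ ⊤ ∧ g ∈ D :=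
    fun g => Iff.rfl
  refine ⟨C, ?_, ?_, ?_, ?_, ?_, ?_⟩
  -- convexity of C
  · intro a ha b hb g hag hgb
    rw [hmemC] at ha hb ⊢
    obtain ⟨D₁, h11, h12, h13⟩ := ha
    obtain ⟨D₂, h21, h22, h23⟩ := hb
    rcases chain D₁ D₂ h11 h21 with h | h
    · exact ⟨D₂, h21, h22, h21 a (h h13) b h23 g hag hgb⟩
    · exact ⟨D₁, h11, h12, h11 a h13 b (h h23) g hag hgb⟩
  -- C ≠ ⊤
  · intro hCtop
    obtain ⟨S, hS⟩ := Group.fg_def.mp (inferInstance : Group.FG G)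
    -- find a single proper convex subgroup containing S
    have hgen : ∀ T : Finset G, ∃ D : Subgroup G, ConvexSub D ∧ D ≠ ⊤ ∧ ∀ s ∈ T, s ∈ D := by
      intro T
      induction T using Finset.induction_on with
      | empty => exact ⟨⊥, convexSub_bot, hbot_ne, by simp⟩
      | @insert a T' hnotmem ih =>
        obtain ⟨D, hD1, hD2, hD3⟩ := ih
        have haC : a ∈ C := by rw [hCtop]; exact Subgroup.mem_top a
        rw [hmemC] at haC
        obtain ⟨D', hD'1, hD'2, hD'3⟩ := haC
        rcases chain D D' hD1 hD'1 with h | h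
        · exact ⟨D', hD'1, hD'2, by
            intro s hs
            rcases Finset.mem_insert.mp hs with h1 | h1
            · exact h1 ▸ hD'3
            · exact h (hD3 s h1)⟩
        · exact ⟨D, hD1, hD2, by
            intro s hs
            rcases Finset.mem_insert.mp hs with h1 | h1
            · exact h1 ▸ h hD'3
            · exact hD3 s h1⟩
    obtain ⟨D, hD1, hD2, hD3⟩ := hgen S
    have : (⊤ : Subgroup G) ≤ D := by
      rw [← hS]
      exact (Subgroup.closure_le D).mpr fun s hs => hD3 s (by simpa using hs)
    exact hD2 (top_le_iff.mp this)
  -- maximality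
  · intro D hD1 hD2 g hg
    exact (hmemC g).mpr ⟨D, hD1, hD2, hg⟩
  -- normality: conjugation is an order automorphism
  · constructor
    intro n hn g
    rw [hmemC] at hn ⊢
    obtain ⟨D, hD1, hD2, hD3⟩ := hn
    refine ⟨D.map (MulAut.conj g).toMonoidHom, ?_, ?_, ?_⟩
    · intro a ha b hb h hah hhb
      obtain ⟨a', ha', rfl⟩ := Subgroup.mem_map.mp ha
      obtain ⟨b', hb', rfl⟩ := Subgroup.mem_map.mp hb
      refine Subgroup.mem_map.mpr ⟨g⁻¹ * h * g, ?_, by simp [MulAut.conj]; group⟩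
      refine hD1 a' ha' b' hb' _ ?_ ?_
      · have h1 : g⁻¹ * ((MulAut.conj g).toMonoidHom a') * g < g⁻¹ * h * g :=
          mul_lt_mul_left (mul_lt_mul_right hah g⁻¹) g
        have h2 : g⁻¹ * ((MulAut.conj g).toMonoidHom a') * g = a' := by
          simp [MulAut.conj]; group
        rwa [h2] at h1
      · have h1 : g⁻¹ * h * g < g⁻¹ * ((MulAut.conj g).toMonoidHom b') * g :=
          mul_lt_mul_left (mul_lt_mul_right hhb g⁻¹) g
        have h2 : g⁻¹ * ((MulAut.conj g).toMonoidHom b') * g = b' := by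
          simp [MulAut.conj]; group
        rwa [h2] at h1
    · intro h
      refine hD2 ?_
      rw [eq_top_iff]
      intro z _
      have hz : (MulAut.conj g) z ∈ D.map (MulAut.conj g).toMonoidHom :=
        h ▸ Subgroup.mem_top _
      obtain ⟨w, hw, hw2⟩ := Subgroup.mem_map.mp hz
      have : w = z := (MulAut.conj g).injective hw2
      exact this ▸ hw
    · exact Subgroup.mem_map.mpr ⟨n, hD3, rfl⟩
  -- commutators
  · intro x y
    rcases lt_trichotomy (x * y * x⁻¹ * y⁻¹) 1 with h | h | h
    · have h1 : 1 < y * x * y⁻¹ * x⁻¹ := by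
        have h2 : 1 < (x * y * x⁻¹ * y⁻¹)⁻¹ := one_lt_inv'.mpr h
        have h3 : (x * y * x⁻¹ * y⁻¹)⁻¹ = y * x * y⁻¹ * x⁻¹ := by group
        rwa [h3] at h2
      obtain ⟨D, hD1, hD2, hD3⟩ := comm_mem_aux y x h1
      rw [hmemC]
      refine ⟨D, hD1, hD2, ?_⟩
      have : (y * x * y⁻¹ * x⁻¹)⁻¹ ∈ D := inv_mem hD3
      have h3 : (y * x * y⁻¹ * x⁻¹)⁻¹ = x * y * x⁻¹ * y⁻¹ := by group
      rwa [h3] at this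
    · rw [show x * y * x⁻¹ * y⁻¹ = 1 from h]
      exact one_mem C
    · obtain ⟨D, hD1, hD2, hD3⟩ := comm_mem_aux x y h
      exact (hmemC _).mpr ⟨D, hD1, hD2, hD3⟩
  -- order-preserving automorphisms
  · have reflect : ∀ (φ : G ≃* G), (∀ a b : G, a < b → φ a < φ b) →
        ∀ a b : G, φ a < φ b → a < b := by
      intro φ hφ a b h
      rcases lt_trichotomy a b with h1 | h1 | h1
      · exact h1
      · exact absurd (h1 ▸ h) (lt_irrefl _)
      · exact absurd (hφ b a h1) (asymm h)
    have mapC : ∀ (φ : G ≃* G), (∀ a b : G, a < b → φ a < φ b) →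
        ∀ g : G, g ∈ C → φ g ∈ C := by
      intro φ hφ g hg
      rw [hmemC] at hg ⊢
      obtain ⟨D, hD1, hD2, hD3⟩ := hg
      refine ⟨D.map φ.toMonoidHom, ?_, ?_, Subgroup.mem_map.mpr ⟨g, hD3, rfl⟩⟩
      · intro a ha b hb h hah hhb
        obtain ⟨a', ha', rfl⟩ := Subgroup.mem_map.mp ha
        obtain ⟨b', hb', rfl⟩ := Subgroup.mem_map.mp hb
        refine Subgroup.mem_map.mpr ⟨φ.symm h, ?_, by simp⟩
        refine hD1 a' ha' b' hb' _ ?_ ?_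
        · refine reflect φ hφ _ _ ?_
          simpa using hah
        · refine reflect φ hφ _ _ ?_
          simpa using hhb
      · intro h
        refine hD2 ?_
        rw [eq_top_iff]
        intro z _
        have hz : φ z ∈ D.map φ.toMonoidHom := h ▸ Subgroup.mem_top _
        obtain ⟨w, hw, hw2⟩ := Subgroup.mem_map.mp hz
        have : w = z := φ.injective hw2
        exact this ▸ hw
    intro φ hφ g
    constructor
    · exact mapC φ hφ g
    · intro h
      have hφsymm : ∀ a b : G, a < b → φ.symm a < φ.symm b := by
        intro a b hab
        refine reflect φ hφ _ _ ?_
        simpa using hab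
      have := mapC φ.symm hφsymm (φ g) h
      simpa using this
end
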